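/- Let ((Aₙ),(Ψₙ)) be a factorable weak operator-valued frame in B(H,H₀) with frame operator S := S_{A,Ψ}. Suppose (Bₙ) is a sequence of bounded operators from H to H₀ such that Σ_{n=1}^∞ ‖Aₙ − Bₙ‖² converges and Σ_{n=1}^∞ ‖Aₙ − Bₙ‖ · ‖Ψₙ (S*)⁻¹‖ < 1. Then ((Bₙ),(Ψₙ)) is a factorable weak OVF in B(H,H₀) with frame bounds (1 − Σ_{n=1}^∞ ‖Aₙ − Bₙ‖ ‖Ψₙ (S*)⁻¹‖) / ‖(S*)⁻¹‖ and ‖θ_Ψ‖ ((Σ_{n=1}^∞ ‖Aₙ − Bₙ‖²)^{1/2} + ‖θ_A‖). -/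

import Mathlib

noncomputable section

open ContinuousLinearMap Filter

variable {H H₀ : Type*} [NormedAddCommGroup H] [InnerProductSpace ℂ H] [CompleteSpace H]
  [NormedAddCommGroup H₀] [InnerProductSpace ℂ H₀] [CompleteSpace H₀]

/-- `ℓ²(I, H₀)`: square-summable `H₀`-valued families indexed by `I`. -/
abbrev l2 (I : Type*) (H₀ : Type*) [NormedAddCommGroup H₀] : Type _ :=
  lp (fun _ : I => H₀) 2

/-- The isometry `Lᵢ : H₀ → ℓ²(I,H₀)` sending `h` to the family equal to `h` at index `i`
and `0` elsewhere. -/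
def Lop {I : Type*} [DecidableEq I] (i : I) : H₀ →L[ℂ] l2 I H₀ :=
  LinearMap.mkContinuous
    { toFun := fun h => lp.single 2 i h
      map_add' := by
        intro a b
        apply lp.ext
        funext j
        by_cases hj : j = i
        · subst hj; simp [lp.single_apply_self]
        · simp [lp.single_apply_ne _ _ _ hj, lp.coeFn_add]
      map_smul' := by
        intro c a
        simp [lp.single_smul] }
    1
    (by
      intro h
      simpa using (lp.norm_single (p := 2) (by norm_num) (fun _ : I => h) i).le)

/-- Convergence of the sequence of partial sums `∑_{n < m} f n` to `x` as `m → ∞`. -/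
def SeqSum {E : Type*} [AddCommMonoid E] [TopologicalSpace E] (f : ℕ → E) (x : E) : Prop :=
  Tendsto (fun m => ∑ n ∈ Finset.range m, f n) atTop (nhds x)

lemma norm_adjoint' {E F : Type*} [NormedAddCommGroup E] [InnerProductSpace ℂ E]
    [CompleteSpace E] [NormedAddCommGroup F] [InnerProductSpace ℂ F] [CompleteSpace F]
    (X : E →L[ℂ] F) : ‖adjoint X‖ = ‖X‖ :=
  adjoint.norm_map X

lemma Lop_apply' (i : ℕ) (x : H₀) : (Lop i x : l2 ℕ H₀) = lp.single 2 i x := rfl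

lemma memℓp_two_of_opNorm (C : ℕ → H →L[ℂ] H₀) (hsq : Summable fun n => ‖C n‖ ^ 2) (h : H) :
    Memℓp (fun n => C n h) 2 := by
  apply memℓp_gen
  have he : ((2 : ENNReal).toReal) = (2 : ℝ) := by norm_num
  simp only [he, Real.rpow_two]
  refine Summable.of_nonneg_of_le (fun n => sq_nonneg _) (fun n => ?_) (hsq.mul_right (‖h‖ ^ 2))
  calc ‖C n h‖ ^ 2 ≤ (‖C n‖ * ‖h‖) ^ 2 :=
        pow_le_pow_left₀ (norm_nonneg _) ((C n).le_opNorm h) 2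
    _ = ‖C n‖ ^ 2 * ‖h‖ ^ 2 := by ring

/-- The analysis-type operator `h ↦ (Cₙ h)ₙ` when `Σ ‖Cₙ‖²` is summable. -/
def thetaC (C : ℕ → H →L[ℂ] H₀) (hsq : Summable fun n => ‖C n‖ ^ 2) : H →L[ℂ] l2 ℕ H₀ :=
  LinearMap.mkContinuous
    { toFun := fun h => (⟨fun n => C n h, memℓp_two_of_opNorm C hsq h⟩ : l2 ℕ H₀)
      map_add' := by
        intro a b
        apply lp.ext
        funext n
        simp [lp.coeFn_add]
        rfl
      map_smul' := by
        intro c a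
        apply lp.ext
        funext n
        simp [lp.coeFn_smul] }
    (Real.sqrt (∑' n, ‖C n‖ ^ 2))
    (by
      intro h
      have hts : 0 ≤ ∑' n, ‖C n‖ ^ 2 := tsum_nonneg fun n => sq_nonneg _
      refine lp.norm_le_of_tsum_le (by norm_num)
        (mul_nonneg (Real.sqrt_nonneg _) (norm_nonneg _)) ?_
      have he : ((2 : ENNReal).toReal) = (2 : ℝ) := by norm_num
      simp only [he, Real.rpow_two]
      have hrhs : (Real.sqrt (∑' n, ‖C n‖ ^ 2) * ‖h‖) ^ 2 = (∑' n, ‖C n‖ ^ 2) * ‖h‖ ^ 2 := by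
        rw [mul_pow, Real.sq_sqrt hts]
      rw [hrhs]
      have hsum2 : Summable fun n => ‖C n‖ ^ 2 * ‖h‖ ^ 2 := hsq.mul_right _
      have hterm : ∀ n : ℕ, ‖C n h‖ ^ 2 ≤ ‖C n‖ ^ 2 * ‖h‖ ^ 2 := by
        intro n
        calc ‖C n h‖ ^ 2 ≤ (‖C n‖ * ‖h‖) ^ 2 :=
              pow_le_pow_left₀ (norm_nonneg _) ((C n).le_opNorm h) 2
          _ = ‖C n‖ ^ 2 * ‖h‖ ^ 2 := by ring
      have hsum1 : Summable fun n => ‖C n h‖ ^ 2 :=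
        Summable.of_nonneg_of_le (fun n => sq_nonneg _) hterm hsum2
      calc (∑' n, ‖C n h‖ ^ 2) ≤ ∑' n, ‖C n‖ ^ 2 * ‖h‖ ^ 2 :=
            Summable.tsum_le_tsum hterm hsum1 hsum2
        _ = (∑' n, ‖C n‖ ^ 2) * ‖h‖ ^ 2 := tsum_mul_right)

lemma thetaC_apply (C : ℕ → H →L[ℂ] H₀) (hsq : Summable fun n => ‖C n‖ ^ 2) (h : H) (n : ℕ) :
    (thetaC C hsq h : ∀ _ : ℕ, H₀) n = C n h := rfl

lemma thetaC_norm_le (C : ℕ → H →L[ℂ] H₀) (hsq : Summable fun n => ‖C n‖ ^ 2) (h : H) :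
    ‖thetaC C hsq h‖ ≤ Real.sqrt (∑' n, ‖C n‖ ^ 2) * ‖h‖ :=
  ((thetaC C hsq).le_opNorm h).trans
    (mul_le_mul_of_nonneg_right
      (LinearMap.mkContinuous_norm_le _ (Real.sqrt_nonneg _) _) (norm_nonneg _))

lemma thetaC_seqSum (C : ℕ → H →L[ℂ] H₀) (hsq : Summable fun n => ‖C n‖ ^ 2) (h : H) :
    SeqSum (fun n => Lop n (C n h)) (thetaC C hsq h) := by
  have h1 : HasSum (fun i : ℕ => lp.single 2 i ((thetaC C hsq h : ∀ _ : ℕ, H₀) i))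
      (thetaC C hsq h) := lp.hasSum_single (by norm_num) _
  have h2 := h1.tendsto_sum_nat
  exact h2.congr fun m => Finset.sum_congr rfl fun n _ => rfl

lemma inner_Lop_seqSum (x : H₀) (n : ℕ) (g : ℕ → H₀) (f : l2 ℕ H₀)
    (hf : SeqSum (fun k => Lop k (g k)) f) :
    (inner ℂ (Lop n x : l2 ℕ H₀) f : ℂ) = inner ℂ x (g n) := by
  have h1 : Tendsto
      (fun m => (inner ℂ (Lop n x : l2 ℕ H₀) (∑ k ∈ Finset.range m, Lop k (g k)) : ℂ))
      atTop (nhds (inner ℂ (Lop n x : l2 ℕ H₀) f)) :=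
    Tendsto.inner tendsto_const_nhds hf
  refine tendsto_nhds_unique h1 ?_
  refine Tendsto.congr' ?_ (tendsto_const_nhds (x := (inner ℂ x (g n) : ℂ)))
  filter_upwards [eventually_gt_atTop n] with m hm
  rw [inner_sum]
  rw [Finset.sum_eq_single_of_mem n (Finset.mem_range.2 hm)]
  · rw [Lop_apply', Lop_apply', lp.inner_single_left, lp.single_apply_self]
  · intro k _ hk
    rw [Lop_apply', Lop_apply', lp.inner_single_left, lp.single_apply, Pi.single_eq_of_ne (Ne.symm hk)]
    exact inner_zero_right x

lemma adj_Lop (θΨ : H →L[ℂ] l2 ℕ H₀) (Ψ : ℕ → H →L[ℂ] H₀)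
    (hθΨ : ∀ h : H, SeqSum (fun n => Lop n (Ψ n h)) (θΨ h)) (n : ℕ) (x : H₀) :
    adjoint θΨ (Lop n x) = adjoint (Ψ n) x := by
  refine ext_inner_right ℂ fun h => ?_
  rw [adjoint_inner_left, adjoint_inner_left]
  exact inner_Lop_seqSum x n (fun k => Ψ k h) (θΨ h) (hθΨ h)

lemma adj_seqSum (θΨ : H →L[ℂ] l2 ℕ H₀) (Ψ : ℕ → H →L[ℂ] H₀)
    (hθΨ : ∀ h : H, SeqSum (fun n => Lop n (Ψ n h)) (θΨ h))
    (X : ℕ → H →L[ℂ] H₀) (θ : H →L[ℂ] l2 ℕ H₀)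
    (hθ : ∀ h : H, SeqSum (fun n => Lop n (X n h)) (θ h)) (h : H) :
    SeqSum (fun n => adjoint (Ψ n) (X n h)) (adjoint θΨ (θ h)) := by
  have h1 : Tendsto (fun m => adjoint θΨ (∑ n ∈ Finset.range m, Lop n (X n h)))
      atTop (nhds (adjoint θΨ (θ h))) :=
    ((adjoint θΨ).continuous.tendsto _).comp (hθ h)
  refine h1.congr fun m => ?_
  rw [map_sum]
  exact Finset.sum_congr rfl fun n _ => adj_Lop θΨ Ψ hθΨ n (X n h)

set_option maxHeartbeats 1000000 in
/-- Quadratic perturbation of a factorable weak OVF `((Aₙ),(Ψₙ))` (frame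
operator `S`, inverse `T`): if `Σ ‖Aₙ − Bₙ‖²` converges and
`Σ ‖Aₙ − Bₙ‖ ‖Ψₙ (S*)⁻¹‖ < 1`, then `((Bₙ),(Ψₙ))` is a factorable weak OVF with the
stated frame bounds. -/
theorem stmt19
    (A Ψ : ℕ → H →L[ℂ] H₀) (S T : H →L[ℂ] H)
    (hS : ∀ h : H, SeqSum (fun n => adjoint (Ψ n) (A n h)) (S h))
    (hST : S ∘L T = 1) (hTS : T ∘L S = 1)
    (θA θΨ : H →L[ℂ] l2 ℕ H₀)
    (hθA : ∀ h : H, SeqSum (fun n => Lop n (A n h)) (θA h))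
    (hθΨ : ∀ h : H, SeqSum (fun n => Lop n (Ψ n h)) (θΨ h))
    (B : ℕ → H →L[ℂ] H₀)
    (hsq : Summable fun n => ‖A n - B n‖ ^ 2)
    (hsum : Summable fun n => ‖A n - B n‖ * ‖Ψ n ∘L adjoint T‖)
    (hlt : (∑' n : ℕ, ‖A n - B n‖ * ‖Ψ n ∘L adjoint T‖) < 1) :
    ∃ (θB : H →L[ℂ] l2 ℕ H₀) (S' : H →L[ℂ] H),
      (∀ h : H, SeqSum (fun n => Lop n (B n h)) (θB h)) ∧
      (∀ h : H, SeqSum (fun n => adjoint (Ψ n) (B n h)) (S' h)) ∧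
      IsUnit S' ∧
      (∀ h : H,
        (1 - ∑' n : ℕ, ‖A n - B n‖ * ‖Ψ n ∘L adjoint T‖) / ‖adjoint T‖ * ‖h‖ ≤ ‖S' h‖ ∧
        ‖S' h‖ ≤ ‖θΨ‖ * (Real.sqrt (∑' n : ℕ, ‖A n - B n‖ ^ 2) + ‖θA‖) * ‖h‖) := by
  classical
  set r := ∑' n : ℕ, ‖A n - B n‖ * ‖Ψ n ∘L adjoint T‖ with hrdef
  have hr0 : 0 ≤ r := tsum_nonneg fun n => mul_nonneg (norm_nonneg _) (norm_nonneg _)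
  set θC := thetaC (fun n => A n - B n) hsq with hθCdef
  have hθC : ∀ h : H, SeqSum (fun n => Lop n ((A n - B n) h)) (θC h) :=
    fun h => thetaC_seqSum _ hsq h
  have hθCnorm : ∀ h : H, ‖θC h‖ ≤ Real.sqrt (∑' n : ℕ, ‖A n - B n‖ ^ 2) * ‖h‖ :=
    fun h => thetaC_norm_le _ hsq h
  set θB := θA - θC with hθBdef
  have hθBsum : ∀ h : H, SeqSum (fun n => Lop n (B n h)) (θB h) := by
    intro h
    have h1 : SeqSum (fun n => Lop n (A n h) - Lop n ((A n - B n) h)) (θA h - θC h) := by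
      have := (hθA h).sub (hθC h)
      refine this.congr fun m => ?_
      exact (Finset.sum_sub_distrib _ _).symm
    have h2 : (fun n => Lop n (A n h) - Lop n ((A n - B n) h)) = fun n => Lop n (B n h) := by
      funext n
      rw [← map_sub]
      congr 1
      simp
    have h3 : θB h = θA h - θC h := rfl
    rw [SeqSum, h3]
    rw [h2] at h1
    exact h1
  have hSrep : ∀ h : H, S h = adjoint θΨ (θA h) := fun h =>
    tendsto_nhds_unique (hS h) (adj_seqSum θΨ Ψ hθΨ A θA hθA h)
  set D := adjoint θΨ ∘L θC with hDdef
  set S' := S - D with hS'def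
  have hS'rep : ∀ h : H, S' h = adjoint θΨ (θB h) := by
    intro h
    have : θB h = θA h - θC h := rfl
    rw [this, map_sub, ← hSrep h]
    rfl
  have hS'sum : ∀ h : H, SeqSum (fun n => adjoint (Ψ n) (B n h)) (S' h) := by
    intro h
    rw [hS'rep h]
    exact adj_seqSum θΨ Ψ hθΨ B θB hθBsum h
  -- bound on T ∘L D
  have hTD : ∀ h : H, ‖(T ∘L D) h‖ ≤ r * ‖h‖ := by
    intro h
    have hDh : SeqSum (fun n => adjoint (Ψ n) ((A n - B n) h)) (D h) :=
      adj_seqSum θΨ Ψ hθΨ _ θC hθC h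
    have h1 : Tendsto (fun m => T (∑ n ∈ Finset.range m, adjoint (Ψ n) ((A n - B n) h)))
        atTop (nhds (T (D h))) := (T.continuous.tendsto _).comp hDh
    have h1' : Tendsto (fun m => ∑ n ∈ Finset.range m, T (adjoint (Ψ n) ((A n - B n) h)))
        atTop (nhds (T (D h))) := h1.congr fun m => map_sum T _ _
    have h2 := h1'.norm
    have h3 : ∀ m : ℕ, ‖∑ n ∈ Finset.range m, T (adjoint (Ψ n) ((A n - B n) h))‖ ≤ r * ‖h‖ := by
      intro m
      calc ‖∑ n ∈ Finset.range m, T (adjoint (Ψ n) ((A n - B n) h))‖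
          ≤ ∑ n ∈ Finset.range m, ‖T (adjoint (Ψ n) ((A n - B n) h))‖ := norm_sum_le _ _
        _ ≤ ∑ n ∈ Finset.range m, ‖A n - B n‖ * ‖Ψ n ∘L adjoint T‖ * ‖h‖ := by
            refine Finset.sum_le_sum fun n _ => ?_
            have e1 : T (adjoint (Ψ n) ((A n - B n) h))
                = adjoint (Ψ n ∘L adjoint T) ((A n - B n) h) := by
              rw [adjoint_comp, adjoint_adjoint]
              rfl
            rw [e1]
            calc ‖adjoint (Ψ n ∘L adjoint T) ((A n - B n) h)‖
                ≤ ‖adjoint (Ψ n ∘L adjoint T)‖ * ‖(A n - B n) h‖ := le_opNorm _ _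
              _ ≤ ‖Ψ n ∘L adjoint T‖ * (‖A n - B n‖ * ‖h‖) := by
                  rw [norm_adjoint']
                  exact mul_le_mul_of_nonneg_left ((A n - B n).le_opNorm h) (norm_nonneg _)
              _ = ‖A n - B n‖ * ‖Ψ n ∘L adjoint T‖ * ‖h‖ := by ring
        _ ≤ r * ‖h‖ := by
            rw [← Finset.sum_mul]
            refine mul_le_mul_of_nonneg_right ?_ (norm_nonneg _)
            exact Summable.sum_le_tsum _ (fun n _ => mul_nonneg (norm_nonneg _) (norm_nonneg _)) hsum
    exact le_of_tendsto h2 (Eventually.of_forall h3)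
  have hTDop : ‖T ∘L D‖ ≤ r := opNorm_le_bound _ hr0 hTD
  have hTDlt : ‖T * D‖ < 1 := by
    rw [mul_def]
    exact lt_of_le_of_lt hTDop hlt
  have hUone : IsUnit (1 - T * D) := (Units.oneSub (T * D) hTDlt).isUnit
  have hmulST : S * T = 1 := by rw [mul_def]; exact hST
  have hmulTS : T * S = 1 := by rw [mul_def]; exact hTS
  have hSunit : IsUnit S := ⟨⟨S, T, hmulST, hmulTS⟩, rfl⟩
  have hfact : S' = S * (1 - T * D) := by
    rw [mul_sub, mul_one, ← mul_assoc, hmulST, one_mul, hS'def]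
  have hS'unit : IsUnit S' := by
    rw [hfact]
    exact hSunit.mul hUone
  have hTnorm : ‖adjoint T‖ = ‖T‖ := norm_adjoint' T
  have hθBapply : ∀ h : H, θB h = θA h - θC h := fun _ => rfl
  clear_value θC θB D S'
  refine ⟨θB, S', hθBsum, hS'sum, hS'unit, fun h => ⟨?_, ?_⟩⟩
  · -- lower bound
    have e1 : T ∘L S' = 1 - T ∘L D := by
      rw [hS'def, comp_sub, hTS]
    have e2 : T (S' h) = h - (T ∘L D) h := by
      have : T (S' h) = (T ∘L S') h := rfl
      rw [this, e1]
      rfl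
    have e3 : (1 - r) * ‖h‖ ≤ ‖T (S' h)‖ := by
      rw [e2]
      have h4 := hTD h
      have h5 : ‖h‖ - ‖(T ∘L D) h‖ ≤ ‖h - (T ∘L D) h‖ := norm_sub_norm_le _ _
      nlinarith [norm_nonneg h]
    have e4 : ‖T (S' h)‖ ≤ ‖T‖ * ‖S' h‖ := le_opNorm _ _
    rw [hTnorm]
    rcases eq_or_lt_of_le (norm_nonneg T) with hT0 | hTpos
    · rw [← hT0, div_zero, zero_mul]
      exact norm_nonneg _
    · rw [div_mul_eq_mul_div, div_le_iff₀ hTpos]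
      calc (1 - r) * ‖h‖ ≤ ‖T‖ * ‖S' h‖ := e3.trans e4
        _ = ‖S' h‖ * ‖T‖ := mul_comm _ _
  · -- upper bound
    have hb : ‖θB h‖ ≤ (Real.sqrt (∑' n : ℕ, ‖A n - B n‖ ^ 2) + ‖θA‖) * ‖h‖ := by
      rw [hθBapply h]
      calc ‖θA h - θC h‖ ≤ ‖θA h‖ + ‖θC h‖ := norm_sub_le _ _
        _ ≤ ‖θA‖ * ‖h‖ + Real.sqrt (∑' n : ℕ, ‖A n - B n‖ ^ 2) * ‖h‖ :=
            add_le_add (le_opNorm _ _) (hθCnorm h)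
        _ = (Real.sqrt (∑' n : ℕ, ‖A n - B n‖ ^ 2) + ‖θA‖) * ‖h‖ := by ring
    calc ‖S' h‖ = ‖adjoint θΨ (θB h)‖ := by rw [hS'rep h]
      _ ≤ ‖adjoint θΨ‖ * ‖θB h‖ := le_opNorm _ _
      _ ≤ ‖θΨ‖ * ((Real.sqrt (∑' n : ℕ, ‖A n - B n‖ ^ 2) + ‖θA‖) * ‖h‖) := by
          rw [norm_adjoint']
          exact mul_le_mul_of_nonneg_left hb (norm_nonneg _)
      _ = ‖θΨ‖ * (Real.sqrt (∑' n : ℕ, ‖A n - B n‖ ^ 2) + ‖θA‖) * ‖h‖ := by ring
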